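/- Let f be a form of degree d in n variables over k that is 2-regular, i.e., for every vector u ∈ k^n, if the polynomial uᵀ·H·u (where H is the Hessian matrix of f) is the zero polynomial, then u = 0. Then the center Z(f) contains no nonzero nilpotent matrix: if X ∈ Z(f) and X^m = 0 for some m ≥ 1, then X = 0. -/

import Mathlib

open MvPolynomial Matrix

/-- The Hessian matrix of a multivariate polynomial. -/
noncomputable def hessian {k : Type*} [Field k] {σ : Type*} (f : MvPolynomial σ k) :
    Matrix σ σ (MvPolynomial σ k) :=
  Matrix.of fun i j => pderiv i (pderiv j f)

/-- The center of a form `f`. -/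
def center {k : Type*} [Field k] {σ : Type*} [Fintype σ] (f : MvPolynomial σ k) :
    Set (Matrix σ σ k) :=
  {X | (hessian f * X.map (C : k → MvPolynomial σ k))ᵀ
        = hessian f * X.map (C : k → MvPolynomial σ k)}

/-- Partial derivatives commute. -/
lemma pderiv_pderiv_comm {R σ : Type*} [CommSemiring R] [DecidableEq σ] (i j : σ)
    (f : MvPolynomial σ R) : pderiv i (pderiv j f) = pderiv j (pderiv i f) := by
  induction f using MvPolynomial.induction_on' with
  | add p q hp hq => simp [hp, hq]
  | monomial s a =>
    rcases eq_or_ne i j with rfl | hij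
    · rfl
    · simp only [pderiv_monomial, Finsupp.tsub_apply, Finsupp.single_apply,
        if_neg hij, if_neg hij.symm, Nat.sub_zero]
      rw [tsub_right_comm]
      ring_nf

/-- The Hessian matrix is symmetric. -/
lemma hessian_transpose {k : Type*} [Field k] {σ : Type*} [DecidableEq σ]
    (f : MvPolynomial σ k) : (hessian f)ᵀ = hessian f :=
  Matrix.ext fun i j => pderiv_pderiv_comm j i f

/-- if `f` is 2-regular (`uᵀ·H·u = 0` as a polynomial only for `u = 0`),
then the center of `f` contains no nonzero nilpotent matrix. -/
theorem center_no_nilpotents_of_two_regular {k : Type*} [Field k] {n d : ℕ} (hd : 3 ≤ d)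
    (hchar : ringChar k = 0 ∨ d < ringChar k)
    (f : MvPolynomial (Fin n) k) (hf : f.IsHomogeneous d)
    (hreg : ∀ u : Fin n → k,
      (∑ i, ∑ j, C (u i) * C (u j) * hessian f i j) = 0 → u = 0) :
    ∀ X ∈ center f, ∀ m : ℕ, 1 ≤ m → X ^ m = 0 → X = 0 := by
  intro X hX m hm hXm
  set H := hessian f with hH
  set Xc := X.map (C : k → MvPolynomial (Fin n) k) with hXcdef
  have hcen : Xcᵀ * H = H * Xc := by
    calc Xcᵀ * H = Xcᵀ * Hᵀ := by rw [hessian_transpose]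
      _ = (H * Xc)ᵀ := (transpose_mul H Xc).symm
      _ = H * Xc := hX
  have hpow : ∀ t : ℕ, (Xc ^ t)ᵀ * H = H * Xc ^ t := by
    intro t
    induction t with
    | zero => simp
    | succ t iht =>
      calc (Xc ^ (t + 1))ᵀ * H = (Xc ^ t * Xc)ᵀ * H := by rw [pow_succ]
        _ = Xcᵀ * ((Xc ^ t)ᵀ * H) := by rw [transpose_mul, mul_assoc]
        _ = Xcᵀ * (H * Xc ^ t) := by rw [iht]
        _ = (Xcᵀ * H) * Xc ^ t := by rw [mul_assoc]
        _ = H * (Xc * Xc ^ t) := by rw [hcen, mul_assoc]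
        _ = H * Xc ^ (t + 1) := by rw [← pow_succ']
  have hmapC : ∀ t : ℕ, Xc ^ t = (X ^ t).map (C : k → MvPolynomial (Fin n) k) := by
    intro t
    rw [hXcdef, ← RingHom.mapMatrix_apply (C : k →+* MvPolynomial (Fin n) k), ← map_pow,
      RingHom.mapMatrix_apply]
  induction m with
  | zero => omega
  | succ m ih =>
    rcases Nat.eq_zero_or_pos m with rfl | hm1
    · simpa using hXm
    · apply ih hm1
      -- show X ^ m = 0
      have hmv : ∀ v : Fin n → k, X ^ m *ᵥ v = 0 := by
        intro v
        apply hreg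
        set u : Fin n → k := X ^ m *ᵥ v with hu
        set vc : Fin n → MvPolynomial (Fin n) k := fun i => C (v i) with hvc
        set uc : Fin n → MvPolynomial (Fin n) k := fun i => C (u i) with huc
        have hucv : uc = Xc ^ m *ᵥ vc := by
          funext i
          rw [huc, hu, hmapC]
          simp [Matrix.mulVec, dotProduct, map_sum, hvc]
        have hq : (∑ i, ∑ j, C (u i) * C (u j) * H i j) = uc ⬝ᵥ (H *ᵥ uc) := by
          simp only [dotProduct, Matrix.mulVec, Finset.mul_sum]
          refine Finset.sum_congr rfl fun i _ => Finset.sum_congr rfl fun j _ => ?_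
          simp only [huc]
          ring
        rw [hq, hucv]
        have hzero : (Xc ^ m)ᵀ * (H * Xc ^ m) = 0 := by
          rw [← mul_assoc, hpow, mul_assoc, ← pow_add, hmapC]
          have : X ^ (m + m) = 0 := by
            have : X ^ (m + m) = X ^ (m + 1) * X ^ (m - 1) := by
              rw [← pow_add]; congr 1; omega
            rw [this, hXm, zero_mul]
          rw [this]
          simp
        calc (Xc ^ m *ᵥ vc) ⬝ᵥ (H *ᵥ (Xc ^ m *ᵥ vc))
            = (Xc ^ m *ᵥ vc) ⬝ᵥ ((H * Xc ^ m) *ᵥ vc) := by rw [Matrix.mulVec_mulVec]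
          _ = (vc ᵥ* (Xc ^ m)ᵀ) ⬝ᵥ ((H * Xc ^ m) *ᵥ vc) := by
              rw [← Matrix.mulVec_transpose, Matrix.transpose_transpose]
          _ = vc ⬝ᵥ ((Xc ^ m)ᵀ *ᵥ ((H * Xc ^ m) *ᵥ vc)) :=
              (Matrix.dotProduct_mulVec vc ((Xc ^ m)ᵀ) ((H * Xc ^ m) *ᵥ vc)).symm
          _ = vc ⬝ᵥ (((Xc ^ m)ᵀ * (H * Xc ^ m)) *ᵥ vc) := by rw [Matrix.mulVec_mulVec]
          _ = 0 := by rw [hzero]; simp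
      ext i j
      have := congrFun (hmv (Pi.single j 1)) i
      simpa [Matrix.mulVec, dotProduct, Pi.single_apply, mul_comm] using this
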